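/- Let G be a finite cyclic group, A a finite cyclic group, K ≤ G, and suppose κ, λ : K → A are both injective homomorphisms. Then there exist a homomorphism φ : G → A and an automorphism α of G with α(K) = K such that λ = (φ|_K) · (κ ∘ α|_K). -/
import Mathlib

/-- In a finite cyclic group, two subgroups of the same cardinality are equal. -/
lemma subgroup_eq_of_card_eq_aux {A : Type*} [Group A] [Finite A] [IsCyclic A]
    (H₁ H₂ : Subgroup A) (h : Nat.card H₁ = Nat.card H₂) : H₁ ≤ H₂ := by
  classical
  cases nonempty_fintype A
  intro x hx
  set d : ℕ := Nat.card H₂ with hd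
  have hd0 : 0 < d := Nat.card_pos
  set S : Finset A := {a : A | a ^ d = 1} with hS
  have hSle : S.card ≤ d := IsCyclic.card_pow_eq_one_le hd0
  -- the image of H₂ inside S
  have hsub : (Set.toFinset (H₂ : Set A)) ⊆ S := by
    intro a ha
    rw [Set.mem_toFinset] at ha
    have : a ^ d = 1 := by
      have := Subgroup.orderOf_dvd_natCard H₂ ha
      exact orderOf_dvd_iff_pow_eq_one.mp this
    simpa [hS] using this
  have hcard : (Set.toFinset (H₂ : Set A)).card = d := by
    rw [Set.toFinset_card]
    simpa [hd] using (Nat.card_eq_fintype_card (α := H₂)).symm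
  have hSeq : (Set.toFinset (H₂ : Set A)) = S :=
    Finset.eq_of_subset_of_card_le hsub (by omega)
  have hxS : x ∈ S := by
    have hx' : x ^ d = 1 := by
      have := Subgroup.orderOf_dvd_natCard H₁ hx
      exact orderOf_dvd_iff_pow_eq_one.mp (h ▸ this)
    simpa [hS] using hx'
  have : x ∈ Set.toFinset (H₂ : Set A) := by rw [hSeq]; exact hxS
  simpa [Set.mem_toFinset] using this

lemma subgroup_eq_of_card_eq {A : Type*} [Group A] [Finite A] [IsCyclic A]
    (H₁ H₂ : Subgroup A) (h : Nat.card H₁ = Nat.card H₂) : H₁ = H₂ :=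
  le_antisymm (subgroup_eq_of_card_eq_aux H₁ H₂ h)
    (subgroup_eq_of_card_eq_aux H₂ H₁ h.symm)

/-- Let `G` and `A` be finite cyclic groups, `K ≤ G`, and suppose
`κ, λ : K → A` are both injective homomorphisms.  Then there exist a
homomorphism `φ : G → A` and an automorphism `α` of `G` with `α(K) = K` such
that `λ = (φ|_K) · (κ ∘ α|_K)`.  (This is the linkage statement: `(G, K, κ)`
and `(G, K, λ)` are linked.) -/
theorem linkage_cyclic (G A : Type*) [Group G] [Finite G] [IsCyclic G]
    [CommGroup A] [Finite A] [IsCyclic A] (K : Subgroup G)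
    (κ lam : ↥K →* A) (hκ : Function.Injective κ)
    (hlam : Function.Injective lam) :
    ∃ (φ : G →* A) (α : G ≃* G) (hα : ∀ x ∈ K, α x ∈ K),
      ∀ k : K, lam k = φ (k : G) * κ ⟨α (k : G), hα (k : G) k.2⟩ := by
  classical
  letI : CommGroup G := IsCyclic.commGroup
  set n : ℕ := Nat.card G with hn
  set m : ℕ := Nat.card K with hm
  have hn0 : 0 < n := Nat.card_pos
  have hm0 : 0 < m := Nat.card_pos
  haveI : NeZero n := ⟨hn0.ne'⟩
  have hmn : m ∣ n := Subgroup.card_subgroup_dvd_card K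
  -- the ranges of κ and lam coincide
  have hrange : lam.range = κ.range := by
    apply subgroup_eq_of_card_eq
    rw [← Nat.card_congr (MonoidHom.ofInjective hlam).toEquiv,
      ← Nat.card_congr (MonoidHom.ofInjective hκ).toEquiv]
  -- build θ : K →* K with κ ∘ θ = lam
  let lam' : ↥K →* κ.range :=
    lam.codRestrict κ.range (fun k => hrange ▸ ⟨k, rfl⟩)
  let θ : ↥K →* ↥K :=
    ((MonoidHom.ofInjective hκ).symm.toMonoidHom).comp lam'
  have hθ : ∀ k : ↥K, κ (θ k) = lam k := by
    intro k
    simpa [θ, lam'] using MonoidHom.apply_ofInjective_symm hκ ⟨lam k, hrange ▸ ⟨k, rfl⟩⟩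
  have hθinj : Function.Injective θ := by
    intro a b hab
    apply hlam
    rw [← hθ, ← hθ, hab]
  -- θ is a power map
  obtain ⟨u, hu⟩ := MonoidHom.map_cyclic θ
  -- replace u by a natural number u₀
  have hmz : ((m : ℤ)) ≠ 0 := by exact_mod_cast hm0.ne'
  set u₀ : ℕ := (u % (m : ℤ)).toNat with hu₀
  have hu₀eq : (u₀ : ℤ) = u % (m : ℤ) :=
    Int.toNat_of_nonneg (Int.emod_nonneg u hmz)
  have hpowm : ∀ k : ↥K, k ^ (m : ℤ) = 1 := by
    intro k
    have : orderOf k ∣ m := orderOf_dvd_natCard k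
    exact_mod_cast (zpow_natCast k m) ▸ (by exact_mod_cast orderOf_dvd_iff_pow_eq_one.mp this : k ^ (m:ℕ) = 1)
  have hku : ∀ k : ↥K, k ^ u = k ^ u₀ := by
    intro k
    conv_lhs => rw [← Int.emod_add_mul_ediv u (m : ℤ)]
    rw [zpow_add, zpow_mul, hpowm, one_zpow, mul_one, ← hu₀eq, zpow_natCast]
  -- u₀ is coprime to m
  obtain ⟨g, hg⟩ := IsCyclic.exists_generator (α := ↥K)
  have hog : orderOf g = m := by
    rw [hm]; exact orderOf_eq_card_of_forall_mem_zpowers hg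
  have hcop₀ : Nat.Coprime u₀ m := by
    have h1 : orderOf (g ^ u₀) = orderOf g := by
      rw [← hku, ← hu g]
      exact orderOf_injective θ hθinj g
    rw [orderOf_pow, hog] at h1
    have := (Nat.div_eq_self.mp h1).resolve_left hm0.ne'
    exact Nat.coprime_comm.mp this
  -- lift the unit u₀ mod m to a unit mod n
  obtain ⟨w, hw⟩ := ZMod.unitsMap_surjective hmn (ZMod.unitOfCoprime u₀ hcop₀)
  set v : ℕ := ((w : ZMod n)).val with hv
  have hvcop : Nat.Coprime v n := ZMod.val_coe_unit_coprime w
  -- v ≡ u₀ [MOD m]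
  have hvu : v ≡ u₀ [MOD m] := by
    have h1 : ((v : ZMod m)) = ((u₀ : ZMod m)) := by
      have h2 : ZMod.castHom hmn (ZMod m) ((w : ZMod n)) = (u₀ : ZMod m) := by
        have := congrArg (Units.val) hw
        simpa [ZMod.unitsMap_def, ZMod.coe_unitOfCoprime] using this
      rw [hv, ZMod.natCast_val]
      rwa [ZMod.castHom_apply] at h2
    exact (ZMod.natCast_eq_natCast_iff _ _ _).mp h1
  -- inverse exponent t
  set t : ℕ := (((w⁻¹ : (ZMod n)ˣ) : ZMod n)).val with ht
  have hvt : v * t ≡ 1 [MOD n] := by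
    have h1 : ((v * t : ℕ) : ZMod n) = ((1 : ℕ) : ZMod n) := by
      push_cast [hv, ht, ZMod.natCast_val, ZMod.cast_id]
      simpa using congrArg Units.val (mul_inv_cancel w)
    exact (ZMod.natCast_eq_natCast_iff _ _ _).mp h1
  have hpow_n : ∀ x : G, x ^ (v * t) = x := by
    intro x
    have : orderOf x ∣ n := orderOf_dvd_natCard x
    calc x ^ (v * t) = x ^ 1 := pow_eq_pow_iff_modEq.mpr (hvt.of_dvd this)
    _ = x := pow_one x
  -- the automorphism α : x ↦ x ^ v
  refine ⟨1, ⟨⟨fun x => x ^ v, fun x => x ^ t, ?_, ?_⟩, fun x y => mul_pow x y v⟩,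
    fun x hx => K.pow_mem hx v, ?_⟩
  · intro x; simpa [← pow_mul] using hpow_n x
  · intro x; simpa [← pow_mul, mul_comm t v] using hpow_n x
  · intro k
    have hsub : (⟨(k : G) ^ v, K.pow_mem k.2 v⟩ : ↥K) = k ^ v := by
      ext; simp
    have hkv : k ^ v = k ^ u₀ := by
      have : orderOf (k : ↥K) ∣ m := orderOf_dvd_natCard k
      exact pow_eq_pow_iff_modEq.mpr (hvu.of_dvd this)
    calc lam k = κ (θ k) := (hθ k).symm
    _ = κ (k ^ u) := by rw [hu k]
    _ = κ (k ^ u₀) := by rw [hku k]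
    _ = 1 * κ (⟨(k : G) ^ v, K.pow_mem k.2 v⟩ : ↥K) := by
        rw [hsub, hkv, one_mul]
    _ = _ := rfl
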